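/- Let X be a compact convex subset of a locally convex topological vector space, let t: X → ℝ be a continuous, strictly positive, concave function, and let B_t = {b/t : b is the restriction to X of a continuous affine complex-valued function}. If ξ ∈ X is not an extreme point of X, then ξ is not in the Choquet boundary of B_t: there exists a positive regular Borel measure μ on X with total mass at most 1, μ ≠ δ_ξ, such that ∫_X g dμ = g(ξ) for all g ∈ B_t. In fact, if ξ = (ξ₁+ξ₂)/2 with ξ₁ ≠ ξ ≠ ξ₂, the measure μ = (t(ξ₁)/(2t(ξ)))δ_{ξ₁} + (t(ξ₂)/(2t(ξ)))δ_{ξ₂} works. -/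

import Mathlib

open MeasureTheory
open scoped ENNReal

/-- Any measure whose value on every set is determined by membership of two points
`a, b` (a combination of two diracs) is regular in a T2 Borel space. -/
lemma twoDirac_regular {E : Type*} [TopologicalSpace E] [T2Space E]
    [MeasurableSpace E] [BorelSpace E] (a b : E) (c d : ℝ≥0∞) (hc : c ≠ ⊤) (hd : d ≠ ⊤) :
    (c • Measure.dirac a + d • Measure.dirac b).Regular := by
  classical
  set μ := c • Measure.dirac a + d • Measure.dirac b with hμ
  have happ : ∀ s : Set E, μ s = (if a ∈ s then c else 0) + (if b ∈ s then d else 0) := by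
    intro s
    simp [hμ, Measure.dirac_apply, Set.indicator]
  have hfin : IsFiniteMeasure μ := by
    constructor
    rw [happ]
    simp [lt_top_iff_ne_top, hc, hd, ENNReal.add_ne_top]
  haveI := hfin
  have hinner : Measure.InnerRegularWRT μ IsCompact IsOpen := by
    intro U hU r hr
    refine ⟨(if a ∈ U then {a} else ∅) ∪ (if b ∈ U then {b} else ∅), ?_, ?_, ?_⟩
    · intro x hx
      rcases hx with hx | hx <;> [skip; skip] <;>
        · split_ifs at hx with h
          · simp_all
          · exact absurd hx (Set.notMem_empty x)
    · apply IsCompact.union <;> split_ifs <;> simp [isCompact_singleton]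
    · have : μ ((if a ∈ U then {a} else ∅) ∪ (if b ∈ U then {b} else ∅)) = μ U := by
        rw [happ, happ]
        congr 1 <;> split_ifs with h1 <;> simp_all <;> tauto
      rwa [this]
  have houter : μ.OuterRegular := by
    constructor
    intro A _ r hr
    refine ⟨(if a ∈ A then Set.univ else {a}ᶜ) ∩ (if b ∈ A then Set.univ else {b}ᶜ), ?_, ?_, ?_⟩
    · intro x hx
      constructor <;> split_ifs with h <;> simp_all <;> rintro rfl <;> exact h hx
    · apply IsOpen.inter <;> split_ifs <;> simp [isOpen_compl_singleton, isClosed_singleton]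
    · have : μ ((if a ∈ A then Set.univ else {a}ᶜ) ∩ (if b ∈ A then Set.univ else {b}ᶜ))
          = μ A := by
        rw [happ, happ]
        congr 1 <;> split_ifs with h1 h2 <;> simp_all <;> tauto
      rw [this]
      exact hr
  exact { innerRegular := hinner, outerRegular := houter.outerRegular }

lemma integrable_dirac' {E : Type*} [MeasurableSpace E] [MeasurableSingletonClass E]
    (a : E) (g : E → ℂ) : Integrable g (Measure.dirac a) := by
  have h : (fun _ : E => g a) =ᵐ[Measure.dirac a] g := by
    rw [ae_dirac_eq]
    exact Filter.eventually_pure.2 rfl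
  exact (integrable_const (g a)).congr h

/-- If `ξ` is not an extreme point of the compact convex set `X`, then `ξ` is not in the
Choquet boundary of `B_t = {f/t : f affine continuous}`: the measure
`(t ξ₁/(2 t ξ)) δ_{ξ₁} + (t ξ₂/(2 t ξ)) δ_{ξ₂}` represents `ξ`, has mass at most `1`,
and differs from `δ_ξ`. -/
theorem stmt9 {E : Type*} [AddCommGroup E] [Module ℝ E] [TopologicalSpace E]
    [IsTopologicalAddGroup E] [ContinuousSMul ℝ E] [LocallyConvexSpace ℝ E] [T2Space E]
    [MeasurableSpace E] [BorelSpace E]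
    (X : Set E) (hXc : IsCompact X) (hXconv : Convex ℝ X)
    (t : E → ℝ) (htc : ContinuousOn t X) (htpos : ∀ x ∈ X, 0 < t x)
    (htconc : ∀ x ∈ X, ∀ y ∈ X, (t x + t y) / 2 ≤ t (midpoint ℝ x y))
    (ξ : E) (hξ : ξ ∈ X)
    (ξ₁ : E) (hξ₁ : ξ₁ ∈ X) (ξ₂ : E) (hξ₂ : ξ₂ ∈ X)
    (hmid : ξ = midpoint ℝ ξ₁ ξ₂) (hne₁ : ξ₁ ≠ ξ) (hne₂ : ξ₂ ≠ ξ) :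
    ∃ μ : Measure E, μ.Regular ∧ μ Set.univ ≤ 1 ∧ μ ≠ Measure.dirac ξ ∧
      (∀ f : E →ᴬ[ℝ] ℂ, ∫ x, f x / (t x : ℂ) ∂μ = f ξ / (t ξ : ℂ)) ∧
      μ = ENNReal.ofReal (t ξ₁ / (2 * t ξ)) • Measure.dirac ξ₁ +
            ENNReal.ofReal (t ξ₂ / (2 * t ξ)) • Measure.dirac ξ₂ := by
  have ht₁ : 0 < t ξ₁ := htpos _ hξ₁
  have ht₂ : 0 < t ξ₂ := htpos _ hξ₂
  have htξ : 0 < t ξ := htpos _ hξ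
  set c₁ : ℝ := t ξ₁ / (2 * t ξ) with hc₁
  set c₂ : ℝ := t ξ₂ / (2 * t ξ) with hc₂
  have hc₁0 : 0 ≤ c₁ := by positivity
  have hc₂0 : 0 ≤ c₂ := by positivity
  refine ⟨ENNReal.ofReal c₁ • Measure.dirac ξ₁ + ENNReal.ofReal c₂ • Measure.dirac ξ₂,
    twoDirac_regular _ _ _ _ ENNReal.ofReal_ne_top ENNReal.ofReal_ne_top, ?_, ?_, ?_, rfl⟩
  · -- total mass at most 1
    have hconc := htconc _ hξ₁ _ hξ₂
    rw [← hmid] at hconc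
    have hsum : c₁ + c₂ ≤ 1 := by
      rw [hc₁, hc₂, ← add_div, div_le_one (by positivity)]
      linarith
    simp only [Measure.add_apply, Measure.smul_apply, smul_eq_mul,
      Measure.dirac_apply_of_mem (Set.mem_univ _), mul_one]
    calc ENNReal.ofReal c₁ + ENNReal.ofReal c₂ = ENNReal.ofReal (c₁ + c₂) :=
          (ENNReal.ofReal_add hc₁0 hc₂0).symm
      _ ≤ ENNReal.ofReal 1 := ENNReal.ofReal_le_ofReal hsum
      _ = 1 := ENNReal.ofReal_one
  · -- not the dirac at ξ
    intro h
    have h1 := congrFun (congrArg (fun m : Measure E => (m : Set E → ℝ≥0∞)) h) {ξ}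
    simp only [Measure.add_apply, Measure.smul_apply, smul_eq_mul,
      Measure.dirac_apply, Set.indicator, Set.mem_singleton_iff, hne₁, hne₂,
      if_false, mul_zero, add_zero, if_true, Pi.one_apply] at h1
    simp at h1
  · -- representation
    intro f
    set g : E → ℂ := fun x => f x / (t x : ℂ) with hg
    have hint₁ : Integrable g (ENNReal.ofReal c₁ • Measure.dirac ξ₁) :=
      (integrable_dirac' ξ₁ g).smul_measure ENNReal.ofReal_ne_top
    have hint₂ : Integrable g (ENNReal.ofReal c₂ • Measure.dirac ξ₂) :=
      (integrable_dirac' ξ₂ g).smul_measure ENNReal.ofReal_ne_top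
    rw [integral_add_measure hint₁ hint₂, integral_smul_measure, integral_smul_measure,
      integral_dirac, integral_dirac, ENNReal.toReal_ofReal hc₁0, ENNReal.toReal_ofReal hc₂0]
    have hfmid : f ξ = (f ξ₁ + f ξ₂) / 2 := by
      rw [hmid]
      have h := (f : E →ᵃ[ℝ] ℂ).map_midpoint ξ₁ ξ₂
      have h' : f (midpoint ℝ ξ₁ ξ₂) = midpoint ℝ (f ξ₁) (f ξ₂) := h
      rw [h', midpoint_eq_smul_add, invOf_eq_inv]
      rw [Complex.real_smul]
      push_cast
      ring
    simp only [hg, hfmid, hc₁, hc₂, Complex.real_smul]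
    have h1 : (t ξ₁ : ℂ) ≠ 0 := by exact_mod_cast ht₁.ne'
    have h2 : (t ξ₂ : ℂ) ≠ 0 := by exact_mod_cast ht₂.ne'
    have h3 : (t ξ : ℂ) ≠ 0 := by exact_mod_cast htξ.ne'
    push_cast
    field_simp
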